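/- arXiv:2501.09452 — 3 statements merged into one kernel-verified Lean document; each statement's English description precedes it below -/
import Mathlib

section
/- Let T > 0 and hmin < hmax be real numbers. Let F : ℝ × ℝ × ℝ → ℝ (arguments t, x, u) and g : ℝ × ℝ → ℝ (arguments t, x) be continuously differentiable. Let x* : ℝ → ℝ be a continuous state trajectory and u* : ℝ → ℝ a control with hmin ≤ u*(t) ≤ hmax on [0, T]. Write a(t) = ∂g/∂x(t, x*(t)) and b(t) = ∂F/∂x(t, x*(t), u*(t)), assume a, b, and t ↦ ∂F/∂u(t, x*(t), u*(t)) are continuous on [0, T], set A(t) = ∫₀ᵗ a(v) dv, and define the coordination function 𝔽(t) = ∂F/∂u(t, x*(t), u*(t))·exp(A(t)) + ∫₀ᵗ b(v)·exp(A(v)) dv. Suppose there exists a differentiable costate λ : ℝ → ℝ satisfying λ'(t) = −b(t) − a(t)·λ(t) on [0, T] and such that for every t ∈ [0, T], u*(t) maximizes u ↦ F(t, x*(t), u) + λ(t)·(g(t, x*(t)) − u) over [hmin, hmax]. Then the constant K = λ(0) satisfies, for every t ∈ [0, T]: if hmin < u*(t) < hmax then 𝔽(t) = K; if u*(t) = hmin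 then 𝔽(t) ≤ K; and if u*(t) = hmax then 𝔽(t) ≥ K. -/
open Set MeasureTheory

/-- FTC: right derivative of a primitive of a function continuous on `[0,T]`. -/
lemma coord_ftc_right (f : ℝ → ℝ) (T : ℝ) (hf : ContinuousOn f (Set.Icc 0 T))
    (x : ℝ) (hx : x ∈ Set.Ico (0:ℝ) T) :
    HasDerivWithinAt (fun t => ∫ v in (0:ℝ)..t, f v) (f x) (Set.Ici x) x := by
  have hsub : Set.Icc 0 x ⊆ Set.Icc 0 T := Set.Icc_subset_Icc le_rfl hx.2.le
  have hint : IntervalIntegrable f volume 0 x := by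
    apply ContinuousOn.intervalIntegrable
    rw [Set.uIcc_of_le hx.1]
    exact hf.mono hsub
  have hIoo : Set.Ioo x T ∈ nhdsWithin x (Set.Ioi x) := Ioo_mem_nhdsGT_of_mem ⟨le_rfl, hx.2⟩
  have hIooIcc : Set.Ioo x T ⊆ Set.Icc 0 T := fun y hy => ⟨hx.1.trans hy.1.le, hy.2.le⟩
  refine intervalIntegral.integral_hasDerivWithinAt_right hint ?_ ?_
  · exact ⟨Set.Ioo x T, hIoo, ((hf.mono hIooIcc).aestronglyMeasurable measurableSet_Ioo)⟩
  · exact ((hf x ⟨hx.1, hx.2.le⟩).mono_of_mem_nhdsWithin (Filter.mem_of_superset hIoo hIooIcc))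



/-- Theorem 1 of the paper (necessary maximum condition): along an optimal
pair `(x*, u*)` for the problem `max ∫₀ᵀ F(t,x,u) dt` subject to
`ẋ = g(t,x) − u`, `u(t) ∈ [hmin, hmax]`, with costate `λ` satisfying the
adjoint equation and pointwise Hamiltonian maximization, the constant
`K = λ(0)` and the coordination function `𝔽` satisfy: `𝔽(t) = K` whenever
`u*(t)` is interior, `𝔽(t) ≤ K` when `u*(t) = hmin`, and `𝔽(t) ≥ K` when
`u*(t) = hmax`. -/
theorem coordination_necessary_maximum_condition
    (T hmin hmax : ℝ) (hT : 0 < T) (hlt : hmin < hmax)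
    (F : ℝ → ℝ → ℝ → ℝ) (g : ℝ → ℝ → ℝ)
    (hF : ContDiff ℝ 1 (fun q : ℝ × ℝ × ℝ => F q.1 q.2.1 q.2.2))
    (hg : ContDiff ℝ 1 (fun q : ℝ × ℝ => g q.1 q.2))
    (xstar ustar : ℝ → ℝ) (hx : Continuous xstar)
    (hu : ∀ t ∈ Set.Icc (0:ℝ) T, ustar t ∈ Set.Icc hmin hmax)
    (a b p : ℝ → ℝ)
    (hagx : ∀ t ∈ Set.Icc (0:ℝ) T, HasDerivAt (fun x => g t x) (a t) (xstar t))
    (hbFx : ∀ t ∈ Set.Icc (0:ℝ) T, HasDerivAt (fun x => F t x (ustar t)) (b t) (xstar t))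
    (hpFu : ∀ t ∈ Set.Icc (0:ℝ) T, HasDerivAt (fun u => F t (xstar t) u) (p t) (ustar t))
    (haC : ContinuousOn a (Set.Icc 0 T))
    (hbC : ContinuousOn b (Set.Icc 0 T))
    (hpC : ContinuousOn p (Set.Icc 0 T))
    (A 𝔽 : ℝ → ℝ)
    (hA : ∀ t, A t = ∫ v in (0:ℝ)..t, a v)
    (h𝔽 : ∀ t, 𝔽 t = p t * Real.exp (A t) + ∫ v in (0:ℝ)..t, b v * Real.exp (A v))
    (l : ℝ → ℝ)
    (hld : ∀ t ∈ Set.Icc (0:ℝ) T, HasDerivAt l (-b t - a t * l t) t)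
    (hmaxH : ∀ t ∈ Set.Icc (0:ℝ) T, ∀ u ∈ Set.Icc hmin hmax,
      F t (xstar t) u + l t * (g t (xstar t) - u) ≤
        F t (xstar t) (ustar t) + l t * (g t (xstar t) - ustar t))
    (K : ℝ) (hK : K = l 0) :
    ∀ t ∈ Set.Icc (0:ℝ) T,
      ((hmin < ustar t ∧ ustar t < hmax) → 𝔽 t = K) ∧
      (ustar t = hmin → 𝔽 t ≤ K) ∧
      (ustar t = hmax → K ≤ 𝔽 t) := by
  have hAfun : A = fun s => ∫ v in (0:ℝ)..s, a v := funext hA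
  -- continuity of A on [0,T]
  have hAc : ContinuousOn A (Set.Icc 0 T) := by
    rw [hAfun]
    have := intervalIntegral.continuousOn_primitive_interval
      (f := a) (a := (0:ℝ)) (b := T) (μ := volume) ?_
    · rwa [Set.uIcc_of_le hT.le] at this
    · rw [Set.uIcc_of_le hT.le]
      exact haC.integrableOn_compact isCompact_Icc
  -- continuity of the second integrand
  have hbe : ContinuousOn (fun v => b v * Real.exp (A v)) (Set.Icc 0 T) :=
    hbC.mul (Real.continuous_exp.comp_continuousOn hAc)
  -- the function Φ is constant equal to l 0 on [0,T]
  set Φ : ℝ → ℝ := fun s => l s * Real.exp (A s) + ∫ v in (0:ℝ)..s, b v * Real.exp (A v)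
    with hΦdef
  have hΦcont : ContinuousOn Φ (Set.Icc 0 T) := by
    refine ContinuousOn.add (ContinuousOn.mul ?_ (Real.continuous_exp.comp_continuousOn hAc)) ?_
    · exact fun s hs => (hld s hs).continuousAt.continuousWithinAt
    · have := intervalIntegral.continuousOn_primitive_interval
        (f := fun v => b v * Real.exp (A v)) (a := (0:ℝ)) (b := T) (μ := volume) ?_
      · rwa [Set.uIcc_of_le hT.le] at this
      · rw [Set.uIcc_of_le hT.le]
        exact hbe.integrableOn_compact isCompact_Icc
  have hΦderiv : ∀ x ∈ Set.Ico (0:ℝ) T, HasDerivWithinAt Φ 0 (Set.Ici x) x := by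
    intro x hx
    have hxI : x ∈ Set.Icc (0:ℝ) T := ⟨hx.1, hx.2.le⟩
    have hA' : HasDerivWithinAt A (a x) (Set.Ici x) x := by
      rw [hAfun]; exact coord_ftc_right a T haC x hx
    have hE : HasDerivWithinAt (fun s => Real.exp (A s)) (Real.exp (A x) * a x)
        (Set.Ici x) x := hA'.exp
    have hl' : HasDerivWithinAt l (-b x - a x * l x) (Set.Ici x) x :=
      (hld x hxI).hasDerivWithinAt
    have hB : HasDerivWithinAt (fun s => ∫ v in (0:ℝ)..s, b v * Real.exp (A v))
        (b x * Real.exp (A x)) (Set.Ici x) x := coord_ftc_right _ T hbe x hx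
    have h := (hl'.mul hE).add hB
    refine h.congr_deriv ?_
    ring
  have hΦ0 : Φ 0 = l 0 := by
    simp [hΦdef, hA 0, intervalIntegral.integral_same]
  have key : ∀ s ∈ Set.Icc (0:ℝ) T, Φ s = K := by
    intro s hs
    rw [hK, ← hΦ0]
    exact constant_of_has_deriv_right_zero hΦcont hΦderiv s hs
  -- main pointwise argument
  intro t ht
  have hKt : K = l t * Real.exp (A t) + ∫ v in (0:ℝ)..t, b v * Real.exp (A v) :=
    (key t ht).symm
  have hFK : 𝔽 t - K = (p t - l t) * Real.exp (A t) := by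
    rw [h𝔽 t, hKt]; ring
  have hexp : 0 < Real.exp (A t) := Real.exp_pos _
  -- derivative of the Hamiltonian in u
  have hdH : HasDerivAt (fun u => F t (xstar t) u + l t * (g t (xstar t) - u))
      (p t - l t) (ustar t) := by
    have h1 := hpFu t ht
    have h2 : HasDerivAt (fun u : ℝ => l t * (g t (xstar t) - u)) (-(l t)) (ustar t) := by
      simpa using (((hasDerivAt_id (ustar t)).const_sub (g t (xstar t))).const_mul (l t))
    simpa [sub_eq_add_neg, Pi.add_def] using h1.add h2
  set φ : ℝ → ℝ := fun u => F t (xstar t) u + l t * (g t (xstar t) - u) with hφdef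
  have hmaxOn : IsMaxOn φ (Set.Icc hmin hmax) (ustar t) := fun u hu => hmaxH t ht u hu
  have hlocOn : IsLocalMaxOn φ (Set.Icc hmin hmax) (ustar t) :=
    hmaxOn.filter_mono (by rw [nhdsWithin]; exact inf_le_right)
  refine ⟨?_, ?_, ?_⟩
  · -- interior case
    rintro ⟨h1, h2⟩
    have hloc : IsLocalMax φ (ustar t) :=
      hmaxOn.isLocalMax (Icc_mem_nhds h1 h2)
    have h0 : p t - l t = 0 := hloc.hasDerivAt_eq_zero hdH
    nlinarith [hFK]
  · -- left endpoint
    intro heq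
    have hy : hmax - hmin ∈ posTangentConeAt (Set.Icc hmin hmax) (ustar t) := by
      rw [heq]
      exact sub_mem_posTangentConeAt_of_segment_subset
        ((convex_Icc hmin hmax).segment_subset (left_mem_Icc.2 hlt.le)
          (right_mem_Icc.2 hlt.le))
    have hnp := hlocOn.hasFDerivWithinAt_nonpos hdH.hasFDerivAt.hasFDerivWithinAt hy
    simp only [ContinuousLinearMap.smulRight_apply, ContinuousLinearMap.one_apply,
      ContinuousLinearMap.toSpanSingleton_apply, smul_eq_mul] at hnp
    nlinarith [hFK]
  · -- right endpoint
    intro heq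
    have hy : hmin - hmax ∈ posTangentConeAt (Set.Icc hmin hmax) (ustar t) := by
      rw [heq]
      exact sub_mem_posTangentConeAt_of_segment_subset
        ((convex_Icc hmin hmax).segment_subset (right_mem_Icc.2 hlt.le)
          (left_mem_Icc.2 hlt.le))
    have hnp := hlocOn.hasFDerivWithinAt_nonpos hdH.hasFDerivAt.hasFDerivWithinAt hy
    simp only [ContinuousLinearMap.smulRight_apply, ContinuousLinearMap.one_apply,
      ContinuousLinearMap.toSpanSingleton_apply, smul_eq_mul] at hnp
    nlinarith [hFK]
end

section
/- Under the setup of Theorem 1 (T > 0; hmin < hmax; F, g continuously differentiable; x* continuous; a(t) = ∂g/∂x(t, x*(t)), b(t) = ∂F/∂x(t, x*(t), u*(t)) and t ↦ ∂F/∂u(t, x*(t), u*(t)) continuous on [0, T]; coordination function 𝔽(t) = ∂F/∂u(t, x*(t), u*(t))·exp(A(t)) + ∫₀ᵗ b(v)·exp(A(v)) dv with A(t) = ∫₀ᵗ a(v) dv; costate λ differentiable with λ'(t) = −b(t) − a(t)·λ(t) on [0, T] and λ(0) = K): if at some t₀ ∈ [0, T] the control value u*(t₀) lies in the open interval (hmin,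 hmax) and maximizes u ↦ F(t₀, x*(t₀), u) + λ(t₀)·(g(t₀, x*(t₀)) − u) over [hmin, hmax], then 𝔽(t₀) = K. -/
/-- Case 1 (interior control) in the proof of Theorem 1: interior
Hamiltonian maximization at `t₀` yields the coordination equation `𝔽(t₀) = K`. -/
theorem coordination_interior_case
    (T hmin hmax : ℝ) (hT : 0 < T) (hlt : hmin < hmax)
    (F : ℝ → ℝ → ℝ → ℝ) (g : ℝ → ℝ → ℝ)
    (hF : ContDiff ℝ 1 (fun q : ℝ × ℝ × ℝ => F q.1 q.2.1 q.2.2))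
    (hg : ContDiff ℝ 1 (fun q : ℝ × ℝ => g q.1 q.2))
    (xstar ustar : ℝ → ℝ) (hx : Continuous xstar)
    (hu : ∀ t ∈ Set.Icc (0:ℝ) T, ustar t ∈ Set.Icc hmin hmax)
    (a b p : ℝ → ℝ)
    (hagx : ∀ t ∈ Set.Icc (0:ℝ) T, HasDerivAt (fun x => g t x) (a t) (xstar t))
    (hbFx : ∀ t ∈ Set.Icc (0:ℝ) T, HasDerivAt (fun x => F t x (ustar t)) (b t) (xstar t))
    (hpFu : ∀ t ∈ Set.Icc (0:ℝ) T, HasDerivAt (fun u => F t (xstar t) u) (p t) (ustar t))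
    (haC : ContinuousOn a (Set.Icc 0 T))
    (hbC : ContinuousOn b (Set.Icc 0 T))
    (hpC : ContinuousOn p (Set.Icc 0 T))
    (A 𝔽 : ℝ → ℝ)
    (hA : ∀ t, A t = ∫ v in (0:ℝ)..t, a v)
    (h𝔽 : ∀ t, 𝔽 t = p t * Real.exp (A t) + ∫ v in (0:ℝ)..t, b v * Real.exp (A v))
    (l : ℝ → ℝ)
    (hld : ∀ t ∈ Set.Icc (0:ℝ) T, HasDerivAt l (-b t - a t * l t) t)
    (K : ℝ) (hK : l 0 = K)
    (t₀ : ℝ) (ht₀ : t₀ ∈ Set.Icc (0:ℝ) T)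
    (hint : hmin < ustar t₀ ∧ ustar t₀ < hmax)
    (hmaxH : ∀ u ∈ Set.Icc hmin hmax,
      F t₀ (xstar t₀) u + l t₀ * (g t₀ (xstar t₀) - u) ≤
        F t₀ (xstar t₀) (ustar t₀) + l t₀ * (g t₀ (xstar t₀) - ustar t₀)) :
    𝔽 t₀ = K := by
  obtain ⟨ht₀0, ht₀T⟩ := ht₀
  -- Step 1: interior maximization gives p t₀ = l t₀
  have hderφ : HasDerivAt (fun u => F t₀ (xstar t₀) u + l t₀ * (g t₀ (xstar t₀) - u))
      (p t₀ - l t₀) (ustar t₀) := by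
    have h1 := hpFu t₀ ⟨ht₀0, ht₀T⟩
    have h2 : HasDerivAt (fun u : ℝ => l t₀ * (g t₀ (xstar t₀) - u)) (l t₀ * (-1)) (ustar t₀) :=
      ((hasDerivAt_id (ustar t₀)).const_sub (g t₀ (xstar t₀))).const_mul (l t₀)
    have := h1.add h2
    exact HasDerivAt.congr_deriv this (by ring)
  have hlmax : IsLocalMax (fun u => F t₀ (xstar t₀) u + l t₀ * (g t₀ (xstar t₀) - u))
      (ustar t₀) := by
    filter_upwards [Ioo_mem_nhds hint.1 hint.2] with u hu'
    exact hmaxH u (Set.Ioo_subset_Icc_self hu')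
  have hpl : p t₀ = l t₀ := by
    have h0 := hlmax.hasDerivAt_eq_zero hderφ
    linarith
  -- continuous extensions of a and b to all of ℝ
  set ta : ℝ → ℝ := Set.IccExtend hT.le ((Set.Icc (0:ℝ) T).restrict a) with hta
  set tb : ℝ → ℝ := Set.IccExtend hT.le ((Set.Icc (0:ℝ) T).restrict b) with htb
  have htaC : Continuous ta := haC.restrict.Icc_extend'
  have htbC : Continuous tb := hbC.restrict.Icc_extend'
  have htaeq : ∀ t ∈ Set.Icc (0:ℝ) T, ta t = a t := fun t ht => by
    simp [hta, Set.IccExtend_of_mem hT.le _ ht]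
    rfl
  have htbeq : ∀ t ∈ Set.Icc (0:ℝ) T, tb t = b t := fun t ht => by
    simp [htb, Set.IccExtend_of_mem hT.le _ ht]
    rfl
  set AE : ℝ → ℝ := fun t => ∫ v in (0:ℝ)..t, ta v with hAE
  have hAEd : ∀ t : ℝ, HasDerivAt AE (ta t) t := fun t =>
    (htaC.integral_hasStrictDerivAt 0 t).hasDerivAt
  have hAEC : Continuous AE :=
    continuous_iff_continuousAt.2 fun t => (hAEd t).continuousAt
  -- AE agrees with A on [0, T]
  have hAEA : ∀ t ∈ Set.Icc (0:ℝ) T, AE t = A t := by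
    intro t ht
    rw [hA t, hAE]
    refine intervalIntegral.integral_congr fun v hv => ?_
    refine htaeq v ?_
    have : Set.uIcc (0:ℝ) t ⊆ Set.Icc 0 T := by
      rw [Set.uIcc_of_le ht.1]
      exact Set.Icc_subset_Icc le_rfl ht.2
    exact this hv
  -- the conserved quantity
  set h : ℝ → ℝ := fun t => l t * Real.exp (AE t) + ∫ v in (0:ℝ)..t, tb v * Real.exp (AE v)
    with hh
  have hintC : Continuous fun v => tb v * Real.exp (AE v) := htbC.mul (Real.continuous_exp.comp hAEC)
  have hhd : ∀ t ∈ Set.Icc (0:ℝ) T, HasDerivAt h 0 t := by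
    intro t ht
    have h1 : HasDerivAt (fun s => l s * Real.exp (AE s))
        ((-b t - a t * l t) * Real.exp (AE t) + l t * (Real.exp (AE t) * ta t)) t :=
      (hld t ht).mul ((hAEd t).exp)
    have h2 : HasDerivAt (fun s => ∫ v in (0:ℝ)..s, tb v * Real.exp (AE v))
        (tb t * Real.exp (AE t)) t := (hintC.integral_hasStrictDerivAt 0 t).hasDerivAt
    have h3 := h1.add h2
    rw [htaeq t ht, htbeq t ht] at h3
    have : (-b t - a t * l t) * Real.exp (AE t) + l t * (Real.exp (AE t) * a t) +
        b t * Real.exp (AE t) = 0 := by ring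
    rw [this] at h3
    exact h3
  have hconst : h t₀ = h 0 := by
    have hcont : ContinuousOn h (Set.Icc 0 T) := fun y hy =>
      ((hhd y hy).continuousAt).continuousWithinAt
    exact constant_of_has_deriv_right_zero hcont
      (fun y hy => ((hhd y (Set.Ico_subset_Icc_self hy)).hasDerivWithinAt)) t₀ ⟨ht₀0, ht₀T⟩
  have hh0 : h 0 = K := by
    simp [hh, hAE, hK]
  -- conclude
  have hFval : 𝔽 t₀ = h t₀ := by
    rw [h𝔽 t₀, hh, hpl]
    simp only
    rw [hAEA t₀ ⟨ht₀0, ht₀T⟩]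
    congr 1
    refine (intervalIntegral.integral_congr fun v hv => ?_).symm
    have hv' : v ∈ Set.Icc (0:ℝ) T := by
      have : Set.uIcc (0:ℝ) t₀ ⊆ Set.Icc 0 T := by
        rw [Set.uIcc_of_le ht₀0]
        exact Set.Icc_subset_Icc le_rfl ht₀T
      exact this hv
    rw [htbeq v hv', hAEA v hv']
  rw [hFval, hconst, hh0]
end

section
/- Under the setup of Theorem 1 (T > 0; hmin < hmax; F, g continuously differentiable; x* continuous; a(t) = ∂g/∂x(t, x*(t)), b(t) = ∂F/∂x(t, x*(t), u*(t)) and t ↦ ∂F/∂u(t, x*(t), u*(t)) continuous on [0, T]; coordination function 𝔽(t) = ∂F/∂u(t, x*(t), u*(t))·exp(A(t)) + ∫₀ᵗ b(v)·exp(A(v)) dv with A(t) = ∫₀ᵗ a(v) dv; costate λ differentiable with λ'(t) = −b(t) − a(t)·λ(t) on [0, T] and λ(0) = K): if at some t₀ ∈ [0, T] one has u*(t₀) = hmin and hmin maximizes u ↦ F(t₀, x*(t₀), u) + λ(t₀)·(g(t₀, x*(t₀)) − u) over [hmin, hmax], then 𝔽(t₀) ≤ K. -/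
/-- Case 2 (control at the lower bound) in the proof of Theorem 1:
Hamiltonian maximization at `u*(t₀) = hmin` yields `𝔽(t₀) ≤ K`. -/
theorem coordination_lower_bound_case
    (T hmin hmax : ℝ) (hT : 0 < T) (hlt : hmin < hmax)
    (F : ℝ → ℝ → ℝ → ℝ) (g : ℝ → ℝ → ℝ)
    (hF : ContDiff ℝ 1 (fun q : ℝ × ℝ × ℝ => F q.1 q.2.1 q.2.2))
    (hg : ContDiff ℝ 1 (fun q : ℝ × ℝ => g q.1 q.2))
    (xstar ustar : ℝ → ℝ) (hx : Continuous xstar)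
    (hu : ∀ t ∈ Set.Icc (0:ℝ) T, ustar t ∈ Set.Icc hmin hmax)
    (a b p : ℝ → ℝ)
    (hagx : ∀ t ∈ Set.Icc (0:ℝ) T, HasDerivAt (fun x => g t x) (a t) (xstar t))
    (hbFx : ∀ t ∈ Set.Icc (0:ℝ) T, HasDerivAt (fun x => F t x (ustar t)) (b t) (xstar t))
    (hpFu : ∀ t ∈ Set.Icc (0:ℝ) T, HasDerivAt (fun u => F t (xstar t) u) (p t) (ustar t))
    (haC : ContinuousOn a (Set.Icc 0 T))
    (hbC : ContinuousOn b (Set.Icc 0 T))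
    (hpC : ContinuousOn p (Set.Icc 0 T))
    (A 𝔽 : ℝ → ℝ)
    (hA : ∀ t, A t = ∫ v in (0:ℝ)..t, a v)
    (h𝔽 : ∀ t, 𝔽 t = p t * Real.exp (A t) + ∫ v in (0:ℝ)..t, b v * Real.exp (A v))
    (l : ℝ → ℝ)
    (hld : ∀ t ∈ Set.Icc (0:ℝ) T, HasDerivAt l (-b t - a t * l t) t)
    (K : ℝ) (hK : l 0 = K)
    (t₀ : ℝ) (ht₀ : t₀ ∈ Set.Icc (0:ℝ) T)
    (hlb : ustar t₀ = hmin)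
    (hmaxH : ∀ u ∈ Set.Icc hmin hmax,
      F t₀ (xstar t₀) u + l t₀ * (g t₀ (xstar t₀) - u) ≤
        F t₀ (xstar t₀) (ustar t₀) + l t₀ * (g t₀ (xstar t₀) - ustar t₀)) :
    𝔽 t₀ ≤ K := by
  obtain ⟨ht₀0, ht₀T⟩ := ht₀
  have ht₀' : t₀ ∈ Set.Icc (0:ℝ) T := ⟨ht₀0, ht₀T⟩
  -- Step 1: p t₀ ≤ l t₀ from maximization at the left endpoint
  have hple : p t₀ ≤ l t₀ := by
    set f : ℝ → ℝ := fun u => F t₀ (xstar t₀) u + l t₀ * (g t₀ (xstar t₀) - u) with hf'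
    have hderiv : HasDerivAt f (p t₀ + l t₀ * (0 - 1)) (ustar t₀) :=
      (hpFu t₀ ht₀').add (((hasDerivAt_const _ _).sub (hasDerivAt_id _)).const_mul _)
    have hmo : IsMaxOn f (Set.Icc hmin hmax) (ustar t₀) := fun u hu' => hmaxH u hu'
    have hmaxo : IsLocalMaxOn f (Set.Icc hmin hmax) (ustar t₀) := hmo.localize
    rw [hlb] at hmaxo hderiv
    have hy : hmax - hmin ∈ posTangentConeAt (Set.Icc hmin hmax) hmin := by
      apply sub_mem_posTangentConeAt_of_segment_subset
      rw [segment_eq_Icc hlt.le]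
    have hkey := hmaxo.hasFDerivWithinAt_nonpos hderiv.hasDerivWithinAt.hasFDerivWithinAt hy
    simp only [ContinuousLinearMap.toSpanSingleton_apply, ContinuousLinearMap.one_apply,
      smul_eq_mul] at hkey
    nlinarith [sub_pos.mpr hlt]
  -- integrability / continuity facts
  have haIntOn : MeasureTheory.IntegrableOn a (Set.Icc 0 T) MeasureTheory.volume :=
    haC.integrableOn_Icc
  have hAC : ContinuousOn A (Set.Icc 0 T) := by
    have h1 : ContinuousOn (fun x => ∫ v in (0:ℝ)..x, a v) (Set.Icc 0 T) := by
      have := intervalIntegral.continuousOn_primitive_interval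
        (f := a) (μ := MeasureTheory.volume) (a := (0:ℝ)) (b := T) ?_
      · rwa [Set.uIcc_of_le hT.le] at this
      · rwa [Set.uIcc_of_le hT.le]
    exact h1.congr (fun x _ => hA x)
  have hbeC : ContinuousOn (fun v => b v * Real.exp (A v)) (Set.Icc 0 T) :=
    hbC.mul (Real.continuous_exp.comp_continuousOn hAC)
  -- Step 2: l t * exp (A t) + ∫₀ᵗ b e^A is constant on [0, T]
  set m : ℝ → ℝ := fun t => l t * Real.exp (A t) + ∫ v in (0:ℝ)..t, b v * Real.exp (A v)
    with hm'
  have hmconst : m t₀ = m 0 := by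
    have hsub : Set.Icc 0 t₀ ⊆ Set.Icc (0:ℝ) T := Set.Icc_subset_Icc le_rfl ht₀T
    have hmc : ContinuousOn m (Set.Icc 0 t₀) := by
      apply ContinuousOn.add
      · exact ContinuousOn.mul (fun x hx => ((hld x (hsub hx)).continuousAt).continuousWithinAt)
          ((Real.continuous_exp.comp_continuousOn hAC).mono hsub)
      · have hInt : IntervalIntegrable (fun v => b v * Real.exp (A v))
            MeasureTheory.volume 0 t₀ := by
          apply ContinuousOn.intervalIntegrable
          rw [Set.uIcc_of_le ht₀0]
          exact hbeC.mono hsub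
        have h2 := intervalIntegral.continuousOn_primitive_interval' hInt
          (by rw [Set.uIcc_of_le ht₀0]; exact Set.left_mem_Icc.2 ht₀0)
        rw [Set.uIcc_of_le ht₀0] at h2
        exact h2
    have hmd : ∀ x ∈ Set.Ico (0:ℝ) t₀, HasDerivWithinAt m 0 (Set.Ici x) x := by
      intro x hx
      have hxT : x ∈ Set.Icc (0:ℝ) T := ⟨hx.1, hx.2.le.trans ht₀T⟩
      have hxT' : x < T := lt_of_lt_of_le hx.2 ht₀T
      have hIccmem : Set.Icc x T ∈ nhdsWithin x (Set.Ioi x) :=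
        Icc_mem_nhdsGT hxT'
      have hsubx : Set.Icc x T ⊆ Set.Icc (0:ℝ) T := Set.Icc_subset_Icc hx.1 le_rfl
      -- derivative of A within Ici x
      have hca : ContinuousWithinAt a (Set.Ioi x) x :=
        ContinuousWithinAt.mono_of_mem_nhdsWithin ((haC x hxT).mono hsubx) hIccmem
      have hmeasa : StronglyMeasurableAtFilter a (nhdsWithin x (Set.Ioi x))
          MeasureTheory.volume :=
        ⟨Set.Icc x T, hIccmem, ((haC.mono hsubx).aestronglyMeasurable measurableSet_Icc)⟩
      have hinta : IntervalIntegrable a MeasureTheory.volume 0 x := by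
        apply ContinuousOn.intervalIntegrable
        rw [Set.uIcc_of_le hx.1]
        exact haC.mono (Set.Icc_subset_Icc le_rfl hxT'.le)
      have hAd : HasDerivWithinAt A (a x) (Set.Ici x) x := by
        have h3 := intervalIntegral.integral_hasDerivWithinAt_right (s := Set.Ici x)
          (t := Set.Ioi x) hinta hmeasa hca
        exact h3.congr (fun y _ => hA y) (hA x)
      have hcb : ContinuousWithinAt (fun v => b v * Real.exp (A v)) (Set.Ioi x) x :=
        ContinuousWithinAt.mono_of_mem_nhdsWithin ((hbeC x hxT).mono hsubx) hIccmem
      have hmeasb : StronglyMeasurableAtFilter (fun v => b v * Real.exp (A v))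
          (nhdsWithin x (Set.Ioi x)) MeasureTheory.volume :=
        ⟨Set.Icc x T, hIccmem, ((hbeC.mono hsubx).aestronglyMeasurable measurableSet_Icc)⟩
      have hintb : IntervalIntegrable (fun v => b v * Real.exp (A v))
          MeasureTheory.volume 0 x := by
        apply ContinuousOn.intervalIntegrable
        rw [Set.uIcc_of_le hx.1]
        exact hbeC.mono (Set.Icc_subset_Icc le_rfl hxT'.le)
      have hI : HasDerivWithinAt (fun t => ∫ v in (0:ℝ)..t, b v * Real.exp (A v))
          (b x * Real.exp (A x)) (Set.Ici x) x :=
        intervalIntegral.integral_hasDerivWithinAt_right (s := Set.Ici x)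
          (t := Set.Ioi x) hintb hmeasb hcb
      have hml : HasDerivWithinAt (fun t => l t * Real.exp (A t))
          ((-b x - a x * l x) * Real.exp (A x) + l x * (Real.exp (A x) * a x))
          (Set.Ici x) x :=
        ((hld x hxT).hasDerivWithinAt).mul (hAd.exp)
      have h4 := hml.add hI
      exact h4.congr_deriv (by ring)
    exact constant_of_has_deriv_right_zero hmc hmd t₀ (Set.right_mem_Icc.2 ht₀0)
  have hm0 : m 0 = K := by
    simp [hm', hA 0, hK]
  have hexp : 0 < Real.exp (A t₀) := Real.exp_pos _
  have hmK : m t₀ = K := hmconst.trans hm0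
  rw [h𝔽 t₀]
  calc p t₀ * Real.exp (A t₀) + ∫ v in (0:ℝ)..t₀, b v * Real.exp (A v)
      ≤ l t₀ * Real.exp (A t₀) + ∫ v in (0:ℝ)..t₀, b v * Real.exp (A v) := by
        have := mul_le_mul_of_nonneg_right hple hexp.le
        linarith
    _ = m t₀ := rfl
    _ = K := hmK
end
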